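/- (Stationary SGD convergence) Assume $l:\mathbb{R}^d \to \mathbb{R}$ is differentiable with $L$-Lipschitz gradient, and the iterates satisfy $\theta_{j+1} = \theta_j - \alpha_{j+1} g_{j+1}$ where each $g_{j+1}$ conditioned on $\theta_j$ is unbiased ($\mathbb{E}[g_{j+1}|\theta_j] = \nabla l(\theta_j)$) with noise bounded by $\|g_{j+1}-\nabla l(\theta_j)\|^2 \le \rho^2$ almost surely, and $0 < \alpha_j < 2/L$ for all $j$. Then $\min_{j \in \{0,\dots,k\}} \mathbb{E}[\|\nabla l(\theta_j)\|^2] \le \frac{2(l(\theta_0) - \mathbb{E}[l(\theta_{k+1})])}{\sum_{j=0}^k (2\alpha_{j+1} - L\alpha_{j+1}^2)} + \frac{L\rho^2 \sum_{j=0}^k \alpha_{j+1}^2}{\sum_{j=0}^k (2\alpha_{j+1} - L\alpha_{j+1}^2)}$. -/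

import Mathlib

open MeasureTheory Finset

section SGDAux

local notation "⟪" x ", " y "⟫" => @inner ℝ _ _ x y

lemma sgd_descent {E : Type*} [NormedAddCommGroup E] [InnerProductSpace ℝ E] [CompleteSpace E]
    {l : E → ℝ} {gl : E → E} {L : ℝ} (hL : 0 < L)
    (hgrad : ∀ x, HasGradientAt l (gl x) x)
    (hlip : ∀ x y, ‖gl x - gl y‖ ≤ L * ‖x - y‖) (x y : E) :
    l y ≤ l x + ⟪gl x, y - x⟫ + L / 2 * ‖y - x‖ ^ 2 := by
  set v := y - x with hv
  have hglc : Continuous gl := by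
    refine (LipschitzWith.of_dist_le_mul (K := L.toNNReal) fun a b => ?_).continuous
    simpa [dist_eq_norm, Real.coe_toNNReal _ hL.le] using hlip a b
  have key : ∀ t : ℝ, HasDerivAt (fun t : ℝ => l (x + t • v)) ⟪gl (x + t • v), v⟫ t := by
    intro t
    have h1 : HasDerivAt (fun t : ℝ => x + t • v) v t := by
      simpa using ((hasDerivAt_id t).smul_const v).const_add x
    have h2 := (hgrad (x + t • v)).hasFDerivAt
    have h3 := h2.comp_hasDerivAt t h1
    simpa [InnerProductSpace.toDual_apply_apply, Function.comp_def] using h3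
  have cont : Continuous fun t : ℝ => ⟪gl (x + t • v), v⟫ :=
    (hglc.comp (continuous_const.add (continuous_id.smul continuous_const))).inner
      continuous_const
  have heq : l y - l x = ∫ t in (0:ℝ)..1, ⟪gl (x + t • v), v⟫ := by
    have := intervalIntegral.integral_eq_sub_of_hasDerivAt (a := 0) (b := 1)
      (fun t _ => key t) (cont.intervalIntegrable 0 1)
    simp only [one_smul, zero_smul, add_zero] at this
    have hxv : x + v = y := by rw [hv]; abel
    rw [hxv] at this
    rw [this]
  have hbound : ∀ t ∈ Set.Icc (0:ℝ) 1,
      ⟪gl (x + t • v), v⟫ ≤ ⟪gl x, v⟫ + L * t * ‖v‖ ^ 2 := by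
    intro t ht
    have h1 : ⟪gl (x + t • v) - gl x, v⟫ ≤ ‖gl (x + t • v) - gl x‖ * ‖v‖ :=
      real_inner_le_norm _ _
    have h2 : ‖gl (x + t • v) - gl x‖ ≤ L * (t * ‖v‖) := by
      have := hlip (x + t • v) x
      simpa [norm_smul, abs_of_nonneg ht.1] using this
    have h3 : ‖gl (x + t • v) - gl x‖ * ‖v‖ ≤ L * t * ‖v‖ ^ 2 := by
      nlinarith [norm_nonneg v]
    have h4 : ⟪gl (x + t • v), v⟫ = ⟪gl x, v⟫ + ⟪gl (x + t • v) - gl x, v⟫ := by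
      rw [inner_sub_left]; ring
    linarith
  have hcont2 : Continuous fun t : ℝ => L * t * ‖v‖ ^ 2 := by fun_prop
  have hle : (∫ t in (0:ℝ)..1, ⟪gl (x + t • v), v⟫)
      ≤ ∫ t in (0:ℝ)..1, (⟪gl x, v⟫ + L * t * ‖v‖ ^ 2) := by
    refine intervalIntegral.integral_mono_on zero_le_one (cont.intervalIntegrable 0 1)
      ((continuous_const.add hcont2).intervalIntegrable 0 1) hbound
  have hrhs : (∫ t in (0:ℝ)..1, (⟪gl x, v⟫ + L * t * ‖v‖ ^ 2))
      = ⟪gl x, v⟫ + L / 2 * ‖v‖ ^ 2 := by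
    rw [intervalIntegral.integral_add (intervalIntegrable_const)
      (hcont2.intervalIntegrable 0 1)]
    have : (∫ t in (0:ℝ)..1, L * t * ‖v‖ ^ 2) = L * ‖v‖ ^ 2 * ∫ t in (0:ℝ)..1, t := by
      rw [← intervalIntegral.integral_const_mul]
      apply intervalIntegral.integral_congr
      intro t _; ring
    rw [this, integral_id]
    simp [intervalIntegral.integral_const]
    ring
  linarith

lemma sgd_condexp_clm {α E F' : Type*} [NormedAddCommGroup E] [NormedSpace ℝ E] [CompleteSpace E]
    [NormedAddCommGroup F'] [NormedSpace ℝ F'] [CompleteSpace F']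
    {m m0 : MeasurableSpace α} {μ : Measure α} [IsFiniteMeasure μ] (hm : m ≤ m0)
    (T : E →L[ℝ] F') {Y : α → E} (hY : Integrable Y μ) :
    μ[fun ω => T (Y ω)|m] =ᵐ[μ] fun ω => T ((μ[Y|m]) ω) := by
  haveI : SigmaFinite (μ.trim hm) := inferInstance
  refine (ae_eq_condExp_of_forall_setIntegral_eq hm (T.integrable_comp hY)
    (fun s _ _ => (T.integrable_comp integrable_condExp).integrableOn)
    (fun s hs hμs => ?_)
    ((T.continuous.comp_stronglyMeasurable stronglyMeasurable_condExp).aestronglyMeasurable)).symm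
  calc ∫ ω in s, T ((μ[Y|m]) ω) ∂μ = T (∫ ω in s, (μ[Y|m]) ω ∂μ) :=
        T.integral_comp_comm integrable_condExp.integrableOn
    _ = T (∫ ω in s, Y ω ∂μ) := by rw [setIntegral_condExp hm hY hs]
    _ = ∫ ω in s, T (Y ω) ∂μ := (T.integral_comp_comm hY.integrableOn).symm

lemma sgd_coord_abs_le {d : ℕ} (x : EuclideanSpace ℝ (Fin d)) (i : Fin d) : |x i| ≤ ‖x‖ := by
  rw [EuclideanSpace.norm_eq, ← Real.sqrt_sq_eq_abs]
  apply Real.sqrt_le_sqrt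
  have := Finset.single_le_sum (f := fun j => ‖x j‖ ^ 2)
    (fun j _ => sq_nonneg _) (Finset.mem_univ i)
  simpa [Real.norm_eq_abs, sq_abs] using this

lemma sgd_inner_integrable {E : Type*} [NormedAddCommGroup E] [InnerProductSpace ℝ E]
    {Ω : Type*} [MeasurableSpace Ω] {μ : Measure Ω} {X Y : Ω → E}
    (hXm : AEStronglyMeasurable X μ) (hYm : AEStronglyMeasurable Y μ)
    (hX2 : Integrable (fun ω => ‖X ω‖ ^ 2) μ) (hY2 : Integrable (fun ω => ‖Y ω‖ ^ 2) μ) :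
    Integrable (fun ω => ⟪X ω, Y ω⟫) μ := by
  refine Integrable.mono' ((hX2.add hY2).div_const 2) (hXm.inner hYm)
    (Filter.Eventually.of_forall fun ω => ?_)
  have h1 : |⟪X ω, Y ω⟫| ≤ ‖X ω‖ * ‖Y ω‖ := abs_real_inner_le_norm _ _
  rw [Real.norm_eq_abs]
  simp only [Pi.add_apply]
  nlinarith [norm_nonneg (X ω), norm_nonneg (Y ω), sq_nonneg (‖X ω‖ - ‖Y ω‖)]

lemma sgd_integral_inner_condexp {d : ℕ} {Ω : Type*} [m0 : MeasurableSpace Ω]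
    {μ : Measure Ω} [IsProbabilityMeasure μ] {F : MeasurableSpace Ω} (hF : F ≤ m0)
    {X Y Z : Ω → EuclideanSpace ℝ (Fin d)}
    (hX : StronglyMeasurable[F] X) (hZm : AEStronglyMeasurable[m0] Z μ)
    (hX2 : Integrable (fun ω => ‖X ω‖ ^ 2) μ)
    (hY : Integrable Y μ) (hY2 : Integrable (fun ω => ‖Y ω‖ ^ 2) μ)
    (hZ2 : Integrable (fun ω => ‖Z ω‖ ^ 2) μ)
    (hcond : μ[Y|F] =ᵐ[μ] Z) :
    ∫ ω, ⟪X ω, Y ω⟫ ∂μ = ∫ ω, ⟪X ω, Z ω⟫ ∂μ := by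
  have hXm : AEStronglyMeasurable[m0] X μ := (hX.mono hF).aestronglyMeasurable
  have hprod : ∀ (W : Ω → EuclideanSpace ℝ (Fin d)), AEStronglyMeasurable[m0] W μ →
      Integrable (fun ω => ‖W ω‖ ^ 2) μ → ∀ i : Fin d,
      Integrable (fun ω => X ω i * W ω i) μ := by
    intro W hWm hW2 i
    refine Integrable.mono' ((hX2.add hW2).div_const 2) ?_ ?_
    · exact ((EuclideanSpace.proj (𝕜 := ℝ) i).continuous.comp_aestronglyMeasurable hXm).mul
        ((EuclideanSpace.proj (𝕜 := ℝ) i).continuous.comp_aestronglyMeasurable hWm)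
    · refine Filter.Eventually.of_forall fun ω => ?_
      have h1 := sgd_coord_abs_le (X ω) i
      have h2 := sgd_coord_abs_le (W ω) i
      have h3 : |X ω i * W ω i| = |X ω i| * |W ω i| := abs_mul _ _
      rw [Real.norm_eq_abs, h3]
      simp only [Pi.add_apply]
      nlinarith [abs_nonneg (X ω i), abs_nonneg (W ω i), norm_nonneg (X ω), norm_nonneg (W ω),
        mul_le_mul h1 h2 (abs_nonneg _) (norm_nonneg _), sq_nonneg (‖X ω‖ - ‖W ω‖)]
  have hinner : ∀ (W : Ω → EuclideanSpace ℝ (Fin d)),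
      (∀ i : Fin d, Integrable (fun ω => X ω i * W ω i) μ) →
      ∫ ω, ⟪X ω, W ω⟫ ∂μ = ∑ i : Fin d, ∫ ω, X ω i * W ω i ∂μ := by
    intro W hWp
    rw [← integral_finset_sum _ (fun i _ => hWp i)]
    refine integral_congr_ae (Filter.Eventually.of_forall fun ω => ?_)
    simp [PiLp.inner_apply, RCLike.inner_apply, conj_trivial, mul_comm]
  rw [hinner Y (hprod Y hY.1 hY2), hinner Z (hprod Z hZm hZ2)]
  refine Finset.sum_congr rfl fun i _ => ?_
  have hcondi : μ[(fun ω => Y ω i)|F] =ᵐ[μ] fun ω => Z ω i := by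
    have h1 := sgd_condexp_clm hF (EuclideanSpace.proj (𝕜 := ℝ) i) hY
    refine h1.trans ?_
    filter_upwards [hcond] with ω hω
    simp [hω]
  have hXi : StronglyMeasurable[F] fun ω => X ω i :=
    (EuclideanSpace.proj (𝕜 := ℝ) i).continuous.comp_stronglyMeasurable hX
  have hYi : Integrable (fun ω => Y ω i) μ := by
    simpa using (EuclideanSpace.proj (𝕜 := ℝ) i).integrable_comp hY
  haveI : SigmaFinite (μ.trim hF) := inferInstance
  calc ∫ ω, X ω i * Y ω i ∂μ
      = ∫ ω, (μ[(fun ω => X ω i * Y ω i)|F]) ω ∂μ := (integral_condExp hF).symm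
    _ = ∫ ω, X ω i * (μ[(fun ω => Y ω i)|F]) ω ∂μ := by
        refine integral_congr_ae ?_
        exact condExp_mul_of_stronglyMeasurable_left hXi (hprod Y hY.1 hY2 i) hYi
    _ = ∫ ω, X ω i * Z ω i ∂μ := by
        refine integral_congr_ae ?_
        filter_upwards [hcondi] with ω hω
        rw [hω]

end SGDAux

/-- Stationary SGD convergence (Theorem 2 of the paper): for an `L`-smooth loss,
unbiased stochastic gradients with noise bounded by `ρ²`, and step sizes `0 < α_j < 2/L`,
the minimum expected squared gradient norm over the first `k+1` iterates is bounded by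
`T_1 + T_2`. -/
theorem stmt4 {d : ℕ} {Ω : Type*} [m0 : MeasurableSpace Ω] (μ : Measure Ω)
    [IsProbabilityMeasure μ]
    (l : EuclideanSpace ℝ (Fin d) → ℝ)
    (gl : EuclideanSpace ℝ (Fin d) → EuclideanSpace ℝ (Fin d)) (L ρ : ℝ)
    (hgrad : ∀ x, HasGradientAt l (gl x) x)
    (hlip : ∀ x y, ‖gl x - gl y‖ ≤ L * ‖x - y‖)
    (α : ℕ → ℝ) (hα : ∀ j, 0 < α j ∧ α j < 2 / L)
    (θ0 : EuclideanSpace ℝ (Fin d))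
    (θ g : ℕ → Ω → EuclideanSpace ℝ (Fin d))
    (F : ℕ → MeasurableSpace Ω) (hF : ∀ j, F j ≤ m0)
    (hθ0 : ∀ ω, θ 0 ω = θ0)
    (hiter : ∀ j ω, θ (j + 1) ω = θ j ω - α (j + 1) • g (j + 1) ω)
    (hmeas : ∀ j, StronglyMeasurable[F j] (θ j))
    (hunbiased : ∀ j, μ[g (j + 1)|F j] =ᵐ[μ] fun ω => gl (θ j ω))
    (hnoise : ∀ j, ∀ᵐ ω ∂μ, ‖g (j + 1) ω - gl (θ j ω)‖ ^ 2 ≤ ρ ^ 2)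
    (hintl : ∀ j, Integrable (fun ω => l (θ j ω)) μ)
    (hintgl : ∀ j, Integrable (fun ω => ‖gl (θ j ω)‖ ^ 2) μ)
    (hintg : ∀ j, Integrable (g j) μ)
    (hintg2 : ∀ j, Integrable (fun ω => ‖g j ω‖ ^ 2) μ)
    (k : ℕ) :
    (Finset.range (k + 1)).inf' (Finset.nonempty_range_iff.mpr k.succ_ne_zero)
        (fun j => ∫ ω, ‖gl (θ j ω)‖ ^ 2 ∂μ)
      ≤ 2 * (l θ0 - ∫ ω, l (θ (k + 1) ω) ∂μ) /
          (∑ j ∈ Finset.range (k + 1), (2 * α (j + 1) - L * α (j + 1) ^ 2))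
        + L * ρ ^ 2 * (∑ j ∈ Finset.range (k + 1), α (j + 1) ^ 2) /
          (∑ j ∈ Finset.range (k + 1), (2 * α (j + 1) - L * α (j + 1) ^ 2)) := by
  classical
  -- L is positive
  have hL : 0 < L := by
    by_contra h
    push_neg at h
    have h2 : (2:ℝ) / L ≤ 0 := by
      rcases h.lt_or_eq with hl | hl
      · exact (div_neg_of_pos_of_neg two_pos hl).le
      · simp [hl]
    have := (hα 0).1
    have := (hα 0).2
    linarith
  have hglc : Continuous gl := by
    refine (LipschitzWith.of_dist_le_mul (K := L.toNNReal) fun a b => ?_).continuous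
    simpa [dist_eq_norm, Real.coe_toNNReal _ hL.le] using hlip a b
  set G : ℕ → ℝ := fun j => ∫ ω, ‖gl (θ j ω)‖ ^ 2 ∂μ with hGdef
  set A : ℕ → ℝ := fun j => ∫ ω, l (θ j ω) ∂μ with hAdef
  -- per-step inequality
  have step : ∀ j, (2 * α (j + 1) - L * α (j + 1) ^ 2) * G j
      ≤ 2 * (A j - A (j + 1)) + L * α (j + 1) ^ 2 * ρ ^ 2 := by
    intro j
    set a := α (j + 1) with hadef
    have ha : 0 < a := (hα (j + 1)).1
    set X : Ω → EuclideanSpace ℝ (Fin d) := fun ω => gl (θ j ω) with hXdef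
    set Y : Ω → EuclideanSpace ℝ (Fin d) := g (j + 1) with hYdef
    have hXsm : StronglyMeasurable[F j] X := hglc.comp_stronglyMeasurable (hmeas j)
    have hXm : AEStronglyMeasurable X μ := (hXsm.mono (hF j)).aestronglyMeasurable
    have hYm : AEStronglyMeasurable Y μ := (hintg (j + 1)).1
    have hIXY : Integrable (fun ω => (inner ℝ (X ω) (Y ω) : ℝ)) μ :=
      sgd_inner_integrable hXm hYm (hintgl j) (hintg2 (j + 1))
    have hIXX : Integrable (fun ω => (inner ℝ (X ω) (X ω) : ℝ)) μ :=
      sgd_inner_integrable hXm hXm (hintgl j) (hintgl j)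
    -- cross term
    have hcross : ∫ ω, (inner ℝ (X ω) (Y ω) : ℝ) ∂μ = G j := by
      rw [sgd_integral_inner_condexp (hF j) hXsm hXm (hintgl j) (hintg (j + 1))
        (hintg2 (j + 1)) (hintgl j) (hunbiased j)]
      refine integral_congr_ae (Filter.Eventually.of_forall fun ω => ?_)
      exact real_inner_self_eq_norm_sq _
    -- second moment bound
    have hIN : Integrable (fun ω => ‖Y ω - X ω‖ ^ 2) μ := by
      have heq : (fun ω => ‖Y ω - X ω‖ ^ 2)
          = fun ω => ‖Y ω‖ ^ 2 - 2 * (inner ℝ (X ω) (Y ω) : ℝ) + ‖X ω‖ ^ 2 := by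
        funext ω
        rw [norm_sub_sq_real, real_inner_comm]
      rw [heq]
      exact ((hintg2 (j + 1)).sub (hIXY.const_mul 2)).add (hintgl j)
    have hNle : ∫ ω, ‖Y ω - X ω‖ ^ 2 ∂μ ≤ ρ ^ 2 := by
      have := integral_mono_ae hIN (integrable_const (ρ ^ 2)) (hnoise j)
      simpa using this
    have hY2eq : ∫ ω, ‖Y ω‖ ^ 2 ∂μ
        = (∫ ω, ‖Y ω - X ω‖ ^ 2 ∂μ) + 2 * (∫ ω, (inner ℝ (X ω) (Y ω) : ℝ) ∂μ)
          - ∫ ω, ‖X ω‖ ^ 2 ∂μ := by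
      have heq : (fun ω => ‖Y ω‖ ^ 2)
          = fun ω => (‖Y ω - X ω‖ ^ 2 + 2 * (inner ℝ (X ω) (Y ω) : ℝ)) - ‖X ω‖ ^ 2 := by
        funext ω
        rw [norm_sub_sq_real, real_inner_comm]
        ring
      have hI2 : Integrable (fun ω => 2 * (inner ℝ (X ω) (Y ω) : ℝ)) μ := hIXY.const_mul 2
      have hIadd : Integrable
          (fun ω => ‖Y ω - X ω‖ ^ 2 + 2 * (inner ℝ (X ω) (Y ω) : ℝ)) μ := hIN.add hI2
      rw [heq, integral_sub hIadd (hintgl j), integral_add hIN hI2, integral_const_mul]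
    have hY2le : ∫ ω, ‖Y ω‖ ^ 2 ∂μ ≤ ρ ^ 2 + G j := by
      rw [hY2eq, hcross]
      have : G j = ∫ ω, ‖X ω‖ ^ 2 ∂μ := rfl
      linarith [hNle, this.ge]
    -- pointwise descent
    have hpt : ∀ ω, l (θ (j + 1) ω)
        ≤ (l (θ j ω) - a * (inner ℝ (X ω) (Y ω) : ℝ)) + (L / 2 * a ^ 2) * ‖Y ω‖ ^ 2 := by
      intro ω
      have hd := sgd_descent hL hgrad hlip (θ j ω) (θ (j + 1) ω)
      have hyx : θ (j + 1) ω - θ j ω = -(a • Y ω) := by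
        rw [hiter j ω]; abel
      rw [hyx, inner_neg_right, real_inner_smul_right, norm_neg, norm_smul] at hd
      have hn : (‖a‖ * ‖Y ω‖) ^ 2 = a ^ 2 * ‖Y ω‖ ^ 2 := by
        rw [mul_pow, Real.norm_eq_abs, sq_abs]
      rw [hn] at hd
      have : (inner ℝ (gl (θ j ω)) (Y ω) : ℝ) = (inner ℝ (X ω) (Y ω) : ℝ) := rfl
      rw [this] at hd
      linarith
    have hIR : Integrable (fun ω => (l (θ j ω) - a * (inner ℝ (X ω) (Y ω) : ℝ))
        + (L / 2 * a ^ 2) * ‖Y ω‖ ^ 2) μ :=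
      ((hintl j).sub (hIXY.const_mul a)).add ((hintg2 (j + 1)).const_mul _)
    have h1 : A (j + 1) ≤ ∫ ω, ((l (θ j ω) - a * (inner ℝ (X ω) (Y ω) : ℝ))
        + (L / 2 * a ^ 2) * ‖Y ω‖ ^ 2) ∂μ :=
      integral_mono (hintl (j + 1)) hIR hpt
    have h2 : ∫ ω, ((l (θ j ω) - a * (inner ℝ (X ω) (Y ω) : ℝ))
        + (L / 2 * a ^ 2) * ‖Y ω‖ ^ 2) ∂μ
        = A j - a * (∫ ω, (inner ℝ (X ω) (Y ω) : ℝ) ∂μ)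
          + (L / 2 * a ^ 2) * ∫ ω, ‖Y ω‖ ^ 2 ∂μ := by
      have hIa : Integrable (fun ω => a * (inner ℝ (X ω) (Y ω) : ℝ)) μ := hIXY.const_mul a
      have hIsub : Integrable (fun ω => l (θ j ω) - a * (inner ℝ (X ω) (Y ω) : ℝ)) μ :=
        (hintl j).sub hIa
      have hIc : Integrable (fun ω => (L / 2 * a ^ 2) * ‖Y ω‖ ^ 2) μ :=
        (hintg2 (j + 1)).const_mul _
      rw [integral_add hIsub hIc, integral_sub (hintl j) hIa, integral_const_mul,
        integral_const_mul]
    rw [h2, hcross] at h1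
    have hcoef : 0 ≤ L / 2 * a ^ 2 := by positivity
    have h3 : (L / 2 * a ^ 2) * (∫ ω, ‖Y ω‖ ^ 2 ∂μ) ≤ (L / 2 * a ^ 2) * (ρ ^ 2 + G j) :=
      mul_le_mul_of_nonneg_left hY2le hcoef
    nlinarith [h1, h3]
  -- sum up
  set S : ℝ := ∑ j ∈ Finset.range (k + 1), (2 * α (j + 1) - L * α (j + 1) ^ 2) with hSdef
  have hterm : ∀ j, 0 < 2 * α (j + 1) - L * α (j + 1) ^ 2 := by
    intro j
    have ha := (hα (j + 1)).1
    have ha2 : L * α (j + 1) < 2 := by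
      have := (hα (j + 1)).2
      rw [lt_div_iff₀ hL] at this
      linarith
    nlinarith
  have hS : 0 < S := Finset.sum_pos (fun j _ => hterm j) (Finset.nonempty_range_iff.mpr k.succ_ne_zero)
  set m := (Finset.range (k + 1)).inf' (Finset.nonempty_range_iff.mpr k.succ_ne_zero) G with hmdef
  have hm_le : ∀ j ∈ Finset.range (k + 1), m ≤ G j := fun j hj => Finset.inf'_le _ hj
  have hsum1 : S * m ≤ ∑ j ∈ Finset.range (k + 1), (2 * α (j + 1) - L * α (j + 1) ^ 2) * G j := by
    rw [hSdef, Finset.sum_mul]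
    exact Finset.sum_le_sum fun j hj =>
      mul_le_mul_of_nonneg_left (hm_le j hj) (hterm j).le
  have hsum2 : ∑ j ∈ Finset.range (k + 1), (2 * α (j + 1) - L * α (j + 1) ^ 2) * G j
      ≤ 2 * (A 0 - A (k + 1)) + L * ρ ^ 2 * ∑ j ∈ Finset.range (k + 1), α (j + 1) ^ 2 := by
    calc ∑ j ∈ Finset.range (k + 1), (2 * α (j + 1) - L * α (j + 1) ^ 2) * G j
        ≤ ∑ j ∈ Finset.range (k + 1), (2 * (A j - A (j + 1)) + L * α (j + 1) ^ 2 * ρ ^ 2) :=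
          Finset.sum_le_sum fun j _ => step j
      _ = 2 * (A 0 - A (k + 1)) + L * ρ ^ 2 * ∑ j ∈ Finset.range (k + 1), α (j + 1) ^ 2 := by
          rw [Finset.sum_add_distrib, ← Finset.mul_sum, Finset.sum_range_sub' A]
          congr 1
          rw [Finset.mul_sum]
          exact Finset.sum_congr rfl fun j _ => by ring
  have hA0 : A 0 = l θ0 := by
    rw [hAdef]
    simp only [hθ0]
    simp
  rw [← add_div, le_div_iff₀ hS]
  have := hsum1.trans hsum2
  rw [hA0] at this
  nlinarith [this, mul_comm m S]
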